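/- arXiv:1208.6211 — 3 statements merged into one kernel-verified Lean document; each statement's English description precedes it below -/
import Mathlib

section
/- Let n ≥ 1, let f : ℝ^n → ℝ be bounded and continuous, and let t > 0. For every y ∈ ℝ^n the function F_f(y, ·) : ℝ → ℝ, F_f(y, s) = w_f((y, s), t), is differentiable in s with ∂_s F_f(y, s) = −∫_{ℝ^n} Γ((y − x, s − f(x)), t) dx < 0; in particular F_f(y, ·) is strictly decreasing. -/
open MeasureTheory Real Filter

noncomputable section

abbrev E (n : ℕ) := EuclideanSpace ℝ (Fin n)

/-- The Euclidean heat kernel on `ℝ^{n+1} = ℝ^n × ℝ`: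
`Γ(z,t) = (4πt)^{-(n+1)/2} exp(-‖z‖²/(4t))`. -/
def heatKernel (n : ℕ) (z : E n × ℝ) (t : ℝ) : ℝ :=
  (4 * Real.pi * t) ^ (-(((n : ℝ) + 1) / 2)) * Real.exp (-(‖z.1‖ ^ 2 + z.2 ^ 2) / (4 * t))

/-- The subgraph `S_f = {(x, s) : s ≤ f x}`. -/
def subgraph (n : ℕ) (f : E n → ℝ) : Set (E n × ℝ) := {p | p.2 ≤ f p.1}

/-- `w_f(x̃, t) = ∫_{S_f} Γ(x̃ - ỹ, t) dỹ`, the heat evolution of `χ_{S_f}`. -/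
def heatEvol (n : ℕ) (f : E n → ℝ) (p : E n × ℝ) (t : ℝ) : ℝ :=
  ∫ q in subgraph n f, heatKernel n (p - q) t

/-- `ℤ^n`-periodicity. -/
def ZPeriodic (n : ℕ) (g : E n → ℝ) : Prop :=
  ∀ x : E n, ∀ k : Fin n → ℤ, g (x + (WithLp.equiv 2 (Fin n → ℝ)).symm (fun i => (k i : ℝ))) = g x

/-- Membership in the space `B` of bounded continuous `ℤ^n`-periodic functions. -/
def InB (n : ℕ) (g : E n → ℝ) : Prop :=
  (∃ M : ℝ, ∀ x, |g x| ≤ M) ∧ Continuous g ∧ ZPeriodic n g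

/-- Second partial derivative `∂_i ∂_j f (x)`. -/
def secondD (n : ℕ) (f : E n → ℝ) (x : E n) (i j : Fin n) : ℝ :=
  fderiv ℝ (fun y => fderiv ℝ f y (EuclideanSpace.single j 1)) x (EuclideanSpace.single i 1)

/-- The coefficients `a_{ij}(p) = δ_{ij} - p_i p_j / (1 + ‖p‖²)`. -/
def aMat (n : ℕ) (p : E n) (i j : Fin n) : ℝ :=
  (if i = j then (1 : ℝ) else 0) - p i * p j / (1 + ‖p‖ ^ 2)

/-- The outward unit normal `ν(x) = (-∇f(x), 1)/√(1+‖∇f(x)‖²)` to the subgraph. -/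
def nuVec (n : ℕ) (f : E n → ℝ) (x : E n) : E n × ℝ :=
  (Real.sqrt (1 + ‖gradient f x‖ ^ 2))⁻¹ • (-gradient f x, (1 : ℝ))

/-- The `i`-th component of the unit normal, `i : Fin (n+1)`. -/
def nuComp (n : ℕ) (f : E n → ℝ) (x : E n) (i : Fin (n + 1)) : ℝ :=
  if h : (i : ℕ) < n then (nuVec n f x).1 ⟨i, h⟩ else (nuVec n f x).2

/-- The `i`-th coordinate direction in `ℝ^{n+1} = ℝ^n × ℝ`. -/
def dirVec (n : ℕ) (i : Fin (n + 1)) : E n × ℝ :=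
  if h : (i : ℕ) < n then (EuclideanSpace.single ⟨i, h⟩ 1, 0) else (0, 1)

/-- Mean curvature of the graph of `f`. -/
def meanCurv (n : ℕ) (f : E n → ℝ) (x : E n) : ℝ :=
  -(Real.sqrt (1 + ‖gradient f x‖ ^ 2))⁻¹ *
    ∑ i, ∑ j, aMat n (gradient f x) i j * secondD n f x i j

/-- Viscosity solution of the resolvent equation `u - λ Σ a_{ij}(∇u) ∂_i∂_j u = f`. -/
def IsViscosityResolvent (n : ℕ) (lam : ℝ) (f u : E n → ℝ) : Prop :=
  Continuous u ∧
  (∀ x : E n, ∀ φ : E n → ℝ, ContDiff ℝ (⊤ : ℕ∞) φ → (∀ y, u y - φ y ≤ u x - φ x) →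
    u x - lam * ∑ i, ∑ j, aMat n (gradient φ x) i j * secondD n φ x i j ≤ f x) ∧
  (∀ x : E n, ∀ φ : E n → ℝ, ContDiff ℝ (⊤ : ℕ∞) φ → (∀ y, u x - φ x ≤ u y - φ y) →
    f x ≤ u x - lam * ∑ i, ∑ j, aMat n (gradient φ x) i j * secondD n φ x i j)

/-- Viscosity solution of `∂_t u = Σ a_{ij}(∇u) ∂_i∂_j u` on `ℝ^n × (0,∞)`. -/
def IsViscosityFlow (n : ℕ) (u : E n → ℝ → ℝ) : Prop :=
  (∀ x : E n, ∀ t : ℝ, 0 < t → ∀ φ : E n → ℝ → ℝ,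
    ContDiff ℝ (⊤ : ℕ∞) (fun p : E n × ℝ => φ p.1 p.2) →
    (∀ y s, 0 < s → u y s - φ y s ≤ u x t - φ x t) →
    deriv (φ x) t ≤
      ∑ i, ∑ j, aMat n (gradient (fun y => φ y t) x) i j * secondD n (fun y => φ y t) x i j) ∧
  (∀ x : E n, ∀ t : ℝ, 0 < t → ∀ φ : E n → ℝ → ℝ,
    ContDiff ℝ (⊤ : ℕ∞) (fun p : E n × ℝ => φ p.1 p.2) →
    (∀ y s, 0 < s → u x t - φ x t ≤ u y s - φ y s) →
    ∑ i, ∑ j, aMat n (gradient (fun y => φ y t) x) i j * secondD n (fun y => φ y t) x i j ≤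
      deriv (φ x) t)

section AuxStmt0

open Set

variable {t : ℝ}

private lemma phi_int (ht : 0 < t) :
    Integrable (fun u : ℝ => Real.exp (-u ^ 2 / (4 * t))) := by
  have h : ∀ u : ℝ, -u ^ 2 / (4 * t) = -(1 / (4 * t)) * u ^ 2 := fun u => by ring
  simp_rw [h]
  exact integrable_exp_neg_mul_sq (by positivity)

private lemma phi_le_one (ht : 0 < t) (u : ℝ) : Real.exp (-u ^ 2 / (4 * t)) ≤ 1 :=
  Real.exp_le_one_iff.mpr
    (div_nonpos_of_nonpos_of_nonneg (neg_nonpos.mpr (sq_nonneg u)) (by positivity))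

private lemma gauss_int (n : ℕ) (ht : 0 < t) :
    Integrable (fun x : E n => Real.exp (-‖x‖ ^ 2 / (4 * t))) := by
  have hb : (0 : ℝ) < ((1 / (4 * t) : ℝ) : ℂ).re := by
    simpa using (by positivity : (0 : ℝ) < 1 / (4 * t))
  have h := (GaussianFourier.integrable_cexp_neg_mul_sq_norm_add
    (V := E n) hb 0 0).norm
  refine h.congr (Filter.Eventually.of_forall fun x => ?_)
  have : ((-(1 / (4 * t) : ℝ) : ℂ) * (‖x‖ : ℂ) ^ 2
      + (0 : ℂ) * (inner ℝ (0 : E n) x : ℝ)).re = -‖x‖ ^ 2 / (4 * t) := by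
    simp [← Complex.ofReal_pow]
    ring
  simp only [Complex.norm_exp, neg_mul]
  rw [show (-(((1 / (4 * t) : ℝ) : ℂ) * (‖x‖ : ℂ) ^ 2)
      + (0 : ℂ) * ((inner ℝ (0 : E n) x : ℝ) : ℂ)) = -((1 / (4 * t) : ℝ) : ℂ) * (‖x‖ : ℂ) ^ 2
      + (0 : ℂ) * ((inner ℝ (0 : E n) x : ℝ) : ℂ) by ring] at *
  rw [this]

private lemma G_hasDeriv (ht : 0 < t) (a : ℝ) :
    HasDerivAt (fun b => ∫ u in Ici b, Real.exp (-u ^ 2 / (4 * t)))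
      (-Real.exp (-a ^ 2 / (4 * t))) a := by
  set φ : ℝ → ℝ := fun u => Real.exp (-u ^ 2 / (4 * t)) with hφ
  have hint := phi_int ht
  have hcont : Continuous φ := by fun_prop
  have key : (fun b : ℝ => ∫ u in Ici b, φ u)
      = fun b => (∫ u, φ u) - ((∫ u in Iic (0 : ℝ), φ u) + ∫ u in (0 : ℝ)..b, φ u) := by
    funext b
    have h1 : (∫ u in Iio b, φ u) + ∫ u in Ici b, φ u = ∫ u, φ u := by
      simpa [compl_Iio] using integral_add_compl measurableSet_Iio hint
    have h2 : (∫ u in Iic b, φ u) - ∫ u in Iic (0 : ℝ), φ u = ∫ u in (0 : ℝ)..b, φ u :=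
      intervalIntegral.integral_Iic_sub_Iic hint.integrableOn hint.integrableOn
    have h3 : (∫ u in Iio b, φ u) = ∫ u in Iic b, φ u :=
      integral_Iic_eq_integral_Iio.symm
    linarith
  rw [key]
  have hd : HasDerivAt (fun b => ∫ u in (0 : ℝ)..b, φ u) (φ a) a :=
    intervalIntegral.integral_hasDerivAt_right hint.intervalIntegrable
      hcont.aestronglyMeasurable.stronglyMeasurableAtFilter hcont.continuousAt
  simpa using (hd.const_add (∫ u in Iic (0 : ℝ), φ u)).const_sub (∫ u, φ u)

private lemma G_nonneg (a : ℝ) :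
    0 ≤ ∫ u in Ici a, Real.exp (-u ^ 2 / (4 * t)) :=
  setIntegral_nonneg measurableSet_Ici fun u _ => (Real.exp_pos _).le

private lemma G_le (ht : 0 < t) (a : ℝ) :
    (∫ u in Ici a, Real.exp (-u ^ 2 / (4 * t))) ≤ ∫ u, Real.exp (-u ^ 2 / (4 * t)) :=
  setIntegral_le_integral (phi_int ht) (Filter.Eventually.of_forall fun u => (Real.exp_pos _).le)

private lemma subst_lemma (s b : ℝ) :
    (∫ r in Iic b, Real.exp (-(s - r) ^ 2 / (4 * t)))
      = ∫ u in Ici (s - b), Real.exp (-u ^ 2 / (4 * t)) := by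
  have hind : ∀ r : ℝ,
      (Iic b).indicator (fun r => Real.exp (-(s - r) ^ 2 / (4 * t))) r
        = (Ici (s - b)).indicator (fun u => Real.exp (-u ^ 2 / (4 * t))) (s - r) := by
    intro r
    simp only [indicator_apply, mem_Iic, mem_Ici, sub_le_sub_iff_left]
  calc (∫ r in Iic b, Real.exp (-(s - r) ^ 2 / (4 * t)))
      = ∫ r, (Iic b).indicator (fun r => Real.exp (-(s - r) ^ 2 / (4 * t))) r :=
        (integral_indicator measurableSet_Iic).symm
    _ = ∫ r, (Ici (s - b)).indicator (fun u => Real.exp (-u ^ 2 / (4 * t))) (s - r) := by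
        simp_rw [hind]
    _ = ∫ u, (Ici (s - b)).indicator (fun u => Real.exp (-u ^ 2 / (4 * t))) u :=
        integral_sub_left_eq_self _ _ s
    _ = ∫ u in Ici (s - b), Real.exp (-u ^ 2 / (4 * t)) :=
        integral_indicator measurableSet_Ici

private lemma key_lemma (n : ℕ) (f : E n → ℝ)
    (hfc : Continuous f) (ht : 0 < t) (y : E n) (s : ℝ) :
    HasDerivAt (fun s' => heatEvol n f (y, s') t)
      (-∫ x : E n, heatKernel n (y - x, s - f x) t) s ∧
    0 < ∫ x : E n, heatKernel n (y - x, s - f x) t := by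
  set c : ℝ := (4 * Real.pi * t) ^ (-(((n : ℝ) + 1) / 2)) with hc
  have hcpos : 0 < c := Real.rpow_pos_of_pos (by positivity) _
  set φ : ℝ → ℝ := fun u => Real.exp (-u ^ 2 / (4 * t)) with hφ
  set g : E n → ℝ := fun x => Real.exp (-‖y - x‖ ^ 2 / (4 * t)) with hg
  set G : ℝ → ℝ := fun a => ∫ u in Ici a, φ u with hG
  have hφ_int : Integrable φ := phi_int ht
  have hφ_cont : Continuous φ := by fun_prop
  have hφ_pos : ∀ u, 0 < φ u := fun u => Real.exp_pos _
  have hg_cont : Continuous g := by fun_prop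
  have hg_nonneg : ∀ x, 0 ≤ g x := fun x => (Real.exp_pos _).le
  have hg_int : Integrable g := by
    have h0 := gauss_int n ht
    exact (integrable_comp_sub_left (fun x : E n => Real.exp (-‖x‖ ^ 2 / (4 * t))) y).mpr h0
  have hG_deriv : ∀ a, HasDerivAt G (-(φ a)) a := fun a => G_hasDeriv ht a
  have hG_cont : Continuous G :=
    continuous_iff_continuousAt.mpr fun a => (hG_deriv a).continuousAt
  have hG_nonneg : ∀ a, 0 ≤ G a := fun a => G_nonneg a
  have hG_le : ∀ a, G a ≤ ∫ u, φ u := fun a => G_le ht a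
  -- pointwise kernel factorization
  have hker : ∀ (s' : ℝ) (q : E n × ℝ),
      heatKernel n ((y, s') - q) t = (c * g q.1) * φ (s' - q.2) := by
    intro s' q
    show c * Real.exp (-(‖((y, s') - q).1‖ ^ 2 + ((y, s') - q).2 ^ 2) / (4 * t)) = _
    have h1 : ((y, s') - q).1 = y - q.1 := rfl
    have h2 : ((y, s') - q).2 = s' - q.2 := rfl
    rw [h1, h2, hg, hφ]
    rw [show -(‖y - q.1‖ ^ 2 + (s' - q.2) ^ 2) / (4 * t)
        = -‖y - q.1‖ ^ 2 / (4 * t) + -(s' - q.2) ^ 2 / (4 * t) by ring, Real.exp_add]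
    ring
  have hker2 : ∀ x : E n,
      heatKernel n (y - x, s - f x) t = (c * g x) * φ (s - f x) := by
    intro x
    simpa using hker s (x, f x)
  have hS : MeasurableSet (subgraph n f) :=
    measurableSet_le measurable_snd (hfc.measurable.comp measurable_fst)
  -- Fubini
  have hfub : ∀ s' : ℝ, heatEvol n f (y, s') t = ∫ x, (c * g x) * G (s' - f x) := by
    intro s'
    have hfun : (fun q : E n × ℝ => heatKernel n ((y, s') - q) t)
        = fun q => (c * g q.1) * φ (s' - q.2) := funext fun q => hker s' q
    have hint2 : Integrable (fun q : E n × ℝ => (c * g q.1) * φ (s' - q.2)) := by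
      have h1 : Integrable (fun r : ℝ => φ (s' - r)) := hφ_int.comp_sub_left s'
      exact ((hg_int.const_mul c).mul_prod h1 : _)
    rw [heatEvol, ← integral_indicator hS, hfun]
    rw [show (volume : Measure (E n × ℝ)) = (volume : Measure (E n)).prod volume from rfl]
    rw [MeasureTheory.integral_prod _ (hint2.indicator hS)]
    refine integral_congr_ae (Filter.Eventually.of_forall fun x => ?_)
    have hx : (fun r : ℝ => (subgraph n f).indicator
          (fun q : E n × ℝ => (c * g q.1) * φ (s' - q.2)) (x, r))
        = (Iic (f x)).indicator (fun r => (c * g x) * φ (s' - r)) := by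
      funext r
      simp only [indicator_apply, mem_Iic, subgraph, Set.mem_setOf_eq]
    show (∫ r : ℝ, (subgraph n f).indicator
        (fun q : E n × ℝ => (c * g q.1) * φ (s' - q.2)) (x, r))
      = (c * g x) * G (s' - f x)
    rw [hx, integral_indicator measurableSet_Iic, MeasureTheory.integral_const_mul]
    congr 1
    simp only [hG, hφ]
    exact subst_lemma s' (f x)
  -- differentiation under the integral sign
  have hcontF : ∀ s' : ℝ, Continuous (fun x : E n => (c * g x) * G (s' - f x)) := fun s' =>
    (continuous_const.mul hg_cont).mul (hG_cont.comp (continuous_const.sub hfc))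
  have hcontF' : ∀ s' : ℝ, Continuous (fun x : E n => -((c * g x) * φ (s' - f x))) := fun s' =>
    ((continuous_const.mul hg_cont).mul (hφ_cont.comp (continuous_const.sub hfc))).neg
  have hbound2 : Integrable (fun x : E n => c * g x) := hg_int.const_mul c
  have hF_int : Integrable (fun x : E n => (c * g x) * G (s - f x)) := by
    refine (hg_int.const_mul (c * (∫ u, φ u))).mono' (hcontF s).aestronglyMeasurable
      (Filter.Eventually.of_forall fun x => ?_)
    rw [Real.norm_eq_abs,
      abs_of_nonneg (mul_nonneg (mul_nonneg hcpos.le (hg_nonneg x)) (hG_nonneg _))]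
    calc (c * g x) * G (s - f x) ≤ (c * g x) * (∫ u, φ u) :=
          mul_le_mul_of_nonneg_left (hG_le _) (mul_nonneg hcpos.le (hg_nonneg x))
      _ = (c * (∫ u, φ u)) * g x := by ring
  have main := hasDerivAt_integral_of_dominated_loc_of_deriv_le (μ := volume)
    (F := fun s' (x : E n) => (c * g x) * G (s' - f x))
    (F' := fun s' (x : E n) => -((c * g x) * φ (s' - f x)))
    (x₀ := s) (bound := fun x => c * g x) (s := Metric.ball s 1) (Metric.ball_mem_nhds s one_pos)
    (Filter.Eventually.of_forall fun s' => (hcontF s').aestronglyMeasurable)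
    hF_int
    (hcontF' s).aestronglyMeasurable
    (Filter.Eventually.of_forall fun x s' _ => by
      rw [norm_neg, Real.norm_eq_abs,
        abs_of_nonneg (mul_nonneg (mul_nonneg hcpos.le (hg_nonneg x)) (hφ_pos _).le)]
      calc (c * g x) * φ (s' - f x) ≤ (c * g x) * 1 :=
            mul_le_mul_of_nonneg_left (phi_le_one ht _) (mul_nonneg hcpos.le (hg_nonneg x))
        _ = c * g x := mul_one _)
    hbound2
    (Filter.Eventually.of_forall fun x s' _ => by
      have h1 : HasDerivAt (fun s' : ℝ => s' - f x) 1 s' := (hasDerivAt_id s').sub_const _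
      have h2 : HasDerivAt (fun s' : ℝ => G (s' - f x)) (-(φ (s' - f x)) * 1) s' :=
        by have := (hG_deriv (s' - f x)).comp s' h1; exact this
      have h3 := h2.const_mul (c * g x)
      convert h3 using 1
      · rfl
      ring)
  obtain ⟨-, hder⟩ := main
  have heq : (fun s' => heatEvol n f (y, s') t) = fun s' => ∫ x, (c * g x) * G (s' - f x) :=
    funext hfub
  have hval : (∫ x : E n, -((c * g x) * φ (s - f x)))
      = -∫ x : E n, heatKernel n (y - x, s - f x) t := by
    rw [integral_neg]
    congr 1
    exact integral_congr_ae (Filter.Eventually.of_forall fun x => (hker2 x).symm)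
  have hKpos : ∀ x : E n, 0 < heatKernel n (y - x, s - f x) t := fun x => by
    rw [hker2 x]
    exact mul_pos (mul_pos hcpos (Real.exp_pos _)) (hφ_pos _)
  constructor
  · rw [heq]
    exact hval ▸ hder
  · have hPfun : (fun x : E n => heatKernel n (y - x, s - f x) t)
        = fun x => (c * g x) * φ (s - f x) := funext hker2
    have hPint : Integrable (fun x : E n => heatKernel n (y - x, s - f x) t) := by
      rw [hPfun]
      refine hbound2.mono'
        (((continuous_const.mul hg_cont).mul
          (hφ_cont.comp (continuous_const.sub hfc)))).aestronglyMeasurable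
        (Filter.Eventually.of_forall fun x => ?_)
      rw [Real.norm_eq_abs,
        abs_of_nonneg (mul_nonneg (mul_nonneg hcpos.le (hg_nonneg x)) (hφ_pos _).le)]
      calc (c * g x) * φ (s - f x) ≤ (c * g x) * 1 :=
            mul_le_mul_of_nonneg_left (phi_le_one ht _) (mul_nonneg hcpos.le (hg_nonneg x))
        _ = c * g x := mul_one _
    rw [integral_pos_iff_support_of_nonneg_ae
      (Filter.Eventually.of_forall fun x => (hKpos x).le) hPint]
    have hsupp : Function.support (fun x : E n => heatKernel n (y - x, s - f x) t)
        = Set.univ := by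
      ext x
      simp [Function.mem_support, (hKpos x).ne']
    rw [hsupp]
    exact isOpen_univ.measure_pos volume ⟨0, trivial⟩

end AuxStmt0

/-- For bounded continuous `f` and `t > 0`, the function
`s ↦ w_f((y,s), t)` is differentiable with derivative
`-∫ Γ((y-x, s-f x), t) dx < 0`; in particular it is strictly decreasing. -/
theorem stmt_0 (n : ℕ) (hn : 1 ≤ n) (f : E n → ℝ)
    (hfb : ∃ M : ℝ, ∀ x, |f x| ≤ M) (hfc : Continuous f)
    (t : ℝ) (ht : 0 < t) (y : E n) :
    (∀ s : ℝ,
      HasDerivAt (fun s' => heatEvol n f (y, s') t)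
        (-∫ x : E n, heatKernel n (y - x, s - f x) t) s ∧
      (-∫ x : E n, heatKernel n (y - x, s - f x) t) < 0) ∧
    StrictAnti (fun s => heatEvol n f (y, s) t) := by
  have key := fun s => key_lemma n f hfc ht y s
  refine ⟨fun s => ⟨(key s).1, neg_neg_iff_pos.mpr (key s).2⟩, ?_⟩
  exact strictAnti_of_deriv_neg fun s => by
    rw [(key s).1.deriv]
    exact neg_neg_iff_pos.mpr (key s).2

end
end

section
/- Let n ≥ 1 and let f : ℝ^n → ℝ be a C², ℤ^n-periodic function. If x̃ ∈ ℝ^{n+1} satisfies dist(x̃, ∂S_f) > 0, then there exist constants α > 0, C > 0 and τ₀ > 0 such that for all τ ∈ (0, τ₀), | ∫_{ℝ^n} ⟨(∇_ỹ Γ)((y, f(y)) − x̃, τ), ν(y)⟩ √(1 + ‖∇f(y)‖²) dy | ≤ C e^{−α/τ}. -/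
open MeasureTheory Real Filter

noncomputable section

/-! ### Auxiliary lemmas for `stmt_8` -/

lemma my_norm_gradient (n : ℕ) (f : E n → ℝ) (x : E n) :
    ‖gradient f x‖ = ‖fderiv ℝ f x‖ := by
  rw [gradient]
  exact LinearIsometryEquiv.norm_map _ _

lemma my_fderiv_periodic (n : ℕ) (f : E n → ℝ) (hf : ContDiff ℝ 2 f)
    (hper : ZPeriodic n f) (w : E n) (k : Fin n → ℤ) :
    fderiv ℝ f (w + (WithLp.equiv 2 (Fin n → ℝ)).symm (fun i => (k i : ℝ)))
      = fderiv ℝ f w := by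
  set c : E n := (WithLp.equiv 2 (Fin n → ℝ)).symm (fun i => (k i : ℝ)) with hc
  have hfd : Differentiable ℝ f := hf.differentiable (by norm_num)
  have h1 : HasFDerivAt (fun y : E n => f (y + c)) (fderiv ℝ f (w + c)) w := by
    have h := (hfd (w + c)).hasFDerivAt.comp w ((hasFDerivAt_id w).add_const c)
    exact h
  have h2 : (fun y : E n => f (y + c)) = f := funext fun y => hper y k
  rw [h2] at h1
  exact h1.fderiv.symm

lemma my_grad_bound (n : ℕ) (f : E n → ℝ) (hf : ContDiff ℝ 2 f) (hper : ZPeriodic n f) :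
    ∃ M : ℝ, 0 ≤ M ∧ ∀ x, ‖gradient f x‖ ≤ M := by
  have hcont : Continuous fun x : E n => ‖fderiv ℝ f x‖ :=
    (hf.continuous_fderiv (by norm_num)).norm
  have hK : IsCompact (Metric.closedBall (0 : E n) ((n : ℝ) + 1)) :=
    isCompact_closedBall _ _
  have hne : (Metric.closedBall (0 : E n) ((n : ℝ) + 1)).Nonempty :=
    ⟨0, by simp [Metric.mem_closedBall]; positivity⟩
  obtain ⟨xM, -, hxM⟩ := hK.exists_isMaxOn hne hcont.continuousOn
  refine ⟨‖fderiv ℝ f xM‖, norm_nonneg _, fun x => ?_⟩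
  set k : Fin n → ℤ := fun i => ⌊x i⌋ with hk
  set c : E n := (WithLp.equiv 2 (Fin n → ℝ)).symm (fun i => ((k i : ℝ))) with hc
  have hci : ∀ i, c i = (k i : ℝ) := fun i => rfl
  have hmem : x - c ∈ Metric.closedBall (0 : E n) ((n : ℝ) + 1) := by
    rw [Metric.mem_closedBall, dist_zero_right]
    have h1 : ‖x - c‖ ≤ Real.sqrt n := by
      rw [EuclideanSpace.norm_eq]
      apply Real.sqrt_le_sqrt
      have : ∀ i : Fin n, ‖(x - c) i‖ ^ 2 ≤ 1 := by
        intro i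
        have : (x - c) i = x i - (k i : ℝ) := by
          simp [PiLp.sub_apply, hci]
        rw [this, hk]
        have h0 : (0:ℝ) ≤ x i - (⌊x i⌋ : ℝ) := by
          have := Int.floor_le (x i); linarith
        have h1 : x i - (⌊x i⌋ : ℝ) ≤ 1 := by
          have := Int.lt_floor_add_one (x i); linarith
        rw [Real.norm_eq_abs, sq_abs]
        nlinarith
      calc ∑ i, ‖(x - c) i‖ ^ 2 ≤ ∑ _i : Fin n, (1:ℝ) :=
            Finset.sum_le_sum fun i _ => this i
        _ = n := by simp
    have h2 : Real.sqrt n ≤ (n : ℝ) + 1 := by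
      rw [show ((n:ℝ) + 1) = Real.sqrt (((n:ℝ)+1)^2) by
        rw [Real.sqrt_sq (by positivity)]]
      apply Real.sqrt_le_sqrt
      nlinarith [Nat.cast_nonneg (α := ℝ) n]
    linarith
  have hxeq : x = (x - c) + c := by abel
  calc ‖gradient f x‖ = ‖fderiv ℝ f x‖ := my_norm_gradient n f x
    _ = ‖fderiv ℝ f ((x - c) + c)‖ := by rw [← hxeq]
    _ = ‖fderiv ℝ f (x - c)‖ := by
        rw [my_fderiv_periodic n f hf hper (x - c) k]
    _ ≤ ‖fderiv ℝ f xM‖ := hxM hmem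

lemma my_hk_fderiv (n : ℕ) {τ : ℝ} (hτ : 0 < τ) (z v : E n × ℝ) :
    fderiv ℝ (fun z : E n × ℝ => heatKernel n z τ) z v
      = heatKernel n z τ *
        (-(2 * (inner ℝ z.1 v.1 : ℝ) + 2 * z.2 * v.2) / (4 * τ)) := by
  set c : ℝ := (4 * Real.pi * τ) ^ (-(((n : ℝ) + 1) / 2)) with hcdef
  have e : (fun z : E n × ℝ => heatKernel n z τ)
      = fun z : E n × ℝ => c * Real.exp ((-(4*τ)⁻¹) * (‖z.1‖ ^ 2 + z.2 * z.2)) := by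
    funext w
    rw [heatKernel]
    congr 1
    rw [sq w.2]
    ring
  have h1 : HasFDerivAt (fun z : E n × ℝ => ‖z.1‖ ^ 2)
      (2 • (innerSL ℝ z.1).comp (ContinuousLinearMap.fst ℝ (E n) ℝ)) z :=
    (hasFDerivAt_fst (p := z)).norm_sq
  have h2 : HasFDerivAt (fun z : E n × ℝ => z.2 * z.2)
      (z.2 • ContinuousLinearMap.snd ℝ (E n) ℝ
        + z.2 • ContinuousLinearMap.snd ℝ (E n) ℝ) z :=
    (hasFDerivAt_snd (p := z)).mul (hasFDerivAt_snd (p := z))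
  have h3 : HasFDerivAt (fun z : E n × ℝ => c * Real.exp ((-(4*τ)⁻¹) * (‖z.1‖ ^ 2 + z.2 * z.2))) _ z :=
    (((h1.add h2).const_mul (-(4*τ)⁻¹)).exp).const_mul c
  rw [e, h3.fderiv]
  rw [heatKernel]
  simp only [ContinuousLinearMap.coe_smul', Pi.smul_apply, ContinuousLinearMap.add_apply,
    ContinuousLinearMap.smul_apply, ContinuousLinearMap.comp_apply,
    ContinuousLinearMap.coe_fst', ContinuousLinearMap.coe_snd', innerSL_apply_apply,
    smul_eq_mul, nsmul_eq_mul, Nat.cast_ofNat, Pi.add_apply]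
  have harg : (-(4*τ)⁻¹) * (‖z.1‖ ^ 2 + z.2 * z.2) = -(‖z.1‖ ^ 2 + z.2 ^ 2) / (4 * τ) := by
    rw [sq z.2]; ring
  rw [harg]
  ring

lemma my_wexp (w : ℝ) (hw : 0 ≤ w) : w * Real.exp (-(w^2)/32) ≤ 8 := by
  rcases le_or_gt w 8 with h | h
  · have h1 : Real.exp (-(w^2)/32) ≤ 1 := by
      rw [Real.exp_le_one_iff]
      nlinarith [sq_nonneg w]
    nlinarith [Real.exp_pos (-(w^2)/32)]
  · have h2 : w^2/32 + 1 ≤ Real.exp (w^2/32) := Real.add_one_le_exp _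
    have h3 : Real.exp (-(w^2)/32) = (Real.exp (w^2/32))⁻¹ := by
      rw [← Real.exp_neg]; ring_nf
    have h4 : (Real.exp (w^2/32))⁻¹ ≤ (w^2/32)⁻¹ := by
      apply inv_anti₀
      · positivity
      · linarith
    have h5 : w * Real.exp (-(w^2)/32) ≤ w * (w^2/32)⁻¹ := by
      rw [h3]; exact mul_le_mul_of_nonneg_left h4 hw
    have h6 : w * (w^2/32)⁻¹ = 32 / w := by
      field_simp
    have h7 : (32:ℝ) / w ≤ 8 := by
      rw [div_le_iff₀ (by linarith : (0:ℝ) < w)]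
      nlinarith
    calc w * Real.exp (-(w^2)/32) ≤ w * (w^2/32)⁻¹ := h5
      _ = 32 / w := h6
      _ ≤ 8 := h7


lemma my_exp_mono1 {Q w τ : ℝ} (hQ : 0 ≤ Q) (hQw : w^2 ≤ 2*Q) (hτ0 : 0 < τ)
    (hτ1 : τ ≤ 1) : -Q/(16*τ) ≤ -(w^2)/32 := by
  rw [div_le_div_iff₀ (by linarith : (0:ℝ) < 16*τ) (by norm_num : (0:ℝ) < 32),
    neg_mul, neg_mul]
  nlinarith

lemma my_exp_mono3 {Q q τ : ℝ} (hq : 0 ≤ q) (hqQ : q ≤ Q) (hτ0 : 0 < τ)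
    (hτ1 : τ ≤ 1) : -Q/(8*τ) ≤ -q/8 := by
  rw [div_le_div_iff₀ (by linarith : (0:ℝ) < 8*τ) (by norm_num : (0:ℝ) < 8),
    neg_mul, neg_mul]
  nlinarith

lemma my_habs_help {a b nz M : ℝ} (hi : |a| ≤ nz * M) (hnz : 0 ≤ nz) (hM : 0 ≤ M)
    (hb : 0 ≤ |b|) : |(-(2*a + 2*b*1))| ≤ 2*(M+1)*(nz + |b|) := by
  rw [abs_neg]
  have h := abs_add_le (2*a) (2*b*1)
  have h1 : |2*a| = 2*|a| := by rw [abs_mul]; norm_num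
  have h2 : |2*b*1| = 2*|b| := by rw [mul_one, abs_mul]; norm_num
  nlinarith [abs_nonneg a]

lemma my_hd2Q_help {a b d : ℝ} (hd : 0 ≤ d) (hmax : d ≤ max a |b|) (ha : 0 ≤ a) :
    d^2 ≤ a^2 + b^2 := by
  rcases max_cases a |b| with ⟨hmx, -⟩ | ⟨hmx, -⟩ <;> rw [hmx] at hmax
  · nlinarith [sq_nonneg b]
  · nlinarith [sq_abs b, abs_nonneg b, sq_nonneg a]

lemma my_hQw_help (a b : ℝ) (ha : 0 ≤ a) : (a + |b|)^2 ≤ 2*(a^2 + b^2) := by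
  nlinarith [sq_abs b, abs_nonneg b, sq_nonneg (a - |b|)]

set_option maxHeartbeats 1000000 in
lemma my_gauss_int (n : ℕ) (x1 : E n) :
    Integrable (fun y : E n => Real.exp (-‖y - x1‖^2 / 8)) := by
  have h0 : Integrable (fun v : E n => Real.exp (-‖v‖^2 / 8)) := by
    have h := (GaussianFourier.integrable_cexp_neg_mul_sq_norm_add
      (V := E n) (b := ((8:ℝ)⁻¹ : ℂ)) (by norm_num) 0 (0 : E n)).norm
    refine h.congr (Filter.Eventually.of_forall fun v => ?_)
    simp only [Complex.norm_exp]
    congr 1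
    simp [Complex.add_re, Complex.mul_re, ← Complex.ofReal_pow]
    ring
  exact h0.comp_sub_right x1

set_option maxHeartbeats 1000000 in
theorem stmt_8' (n : ℕ) (hn : 1 ≤ n) (f : E n → ℝ)
    (hf : ContDiff ℝ 2 f) (hper : ZPeriodic n f) (xt : E n × ℝ)
    (hdist : 0 < Metric.infDist xt {p : E n × ℝ | p.2 = f p.1}) :
    ∃ α > (0 : ℝ), ∃ C > (0 : ℝ), ∃ τ₀ > (0 : ℝ), ∀ τ : ℝ, 0 < τ → τ < τ₀ →
      |∫ y : E n, fderiv ℝ (fun z : E n × ℝ => heatKernel n z τ)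
            ((y, f y) - xt) (nuVec n f y) *
          Real.sqrt (1 + ‖gradient f y‖ ^ 2)| ≤ C * Real.exp (-α / τ) := by
  obtain ⟨M, hM0, hM⟩ := my_grad_bound n f hf hper
  set d : ℝ := Metric.infDist xt {p : E n × ℝ | p.2 = f p.1} with hddef
  have hd0 : 0 < d := hdist
  set I : ℝ := ∫ y : E n, Real.exp (-‖y - xt.1‖^2 / 8) with hIdef
  have hI : Integrable (fun y : E n => Real.exp (-‖y - xt.1‖^2 / 8)) :=
    my_gauss_int n xt.1
  have hInn : 0 ≤ I := integral_nonneg fun y => (Real.exp_pos _).le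
  set P : ℝ := (Nat.factorial (n+2) : ℝ) * (32/d^2)^(n+2) with hPdef
  have hPpos : 0 < P := by
    apply mul_pos
    · exact_mod_cast Nat.factorial_pos _
    · positivity
  have hCpos : (0:ℝ) < 4*(M+1)*(I+1)*P + 1 := by
    have h1 : (0:ℝ) < 4*(M+1) := by linarith
    have h2 : (0:ℝ) < I+1 := by linarith
    nlinarith [mul_pos (mul_pos h1 h2) hPpos]
  refine ⟨d^2/32, by positivity, 4*(M+1)*(I+1)*P + 1, hCpos, 1, one_pos,
    fun τ hτ0 hτ1 => ?_⟩
  set C : ℝ := 4*(M+1)*(I+1)*P + 1 with hCdef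
  set K : ℝ := 4 * (M+1) * (τ^(n+2))⁻¹ * Real.exp (-d^2/(16*τ)) with hKdef
  have hτne : τ ≠ 0 := ne_of_gt hτ0
  have hτn2 : (0:ℝ) < τ^(n+2) := pow_pos hτ0 _
  -- pointwise bound
  have hbound : ∀ y : E n,
      |fderiv ℝ (fun z : E n × ℝ => heatKernel n z τ) ((y, f y) - xt) (nuVec n f y) *
        Real.sqrt (1 + ‖gradient f y‖ ^ 2)|
      ≤ K * Real.exp (-‖y - xt.1‖^2/8) := by
    intro y
    set z : E n × ℝ := (y, f y) - xt with hzdef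
    have hz1 : z.1 = y - xt.1 := rfl
    have hz2 : z.2 = f y - xt.2 := rfl
    set g0 : E n := gradient f y with hg0def
    have hs : (0:ℝ) < Real.sqrt (1 + ‖g0‖^2) := Real.sqrt_pos.mpr (by positivity)
    have hν : Real.sqrt (1 + ‖g0‖ ^ 2) • nuVec n f y = ((-g0, (1:ℝ)) : E n × ℝ) := by
      rw [nuVec, smul_smul, mul_inv_cancel₀ hs.ne', one_smul]
    have e1 : fderiv ℝ (fun z : E n × ℝ => heatKernel n z τ) z (nuVec n f y) *
        Real.sqrt (1 + ‖g0‖ ^ 2)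
        = heatKernel n z τ *
          (-(2 * (inner ℝ z.1 (-g0) : ℝ) + 2 * z.2 * 1) / (4*τ)) := by
      have hmap := (fderiv ℝ (fun z : E n × ℝ => heatKernel n z τ) z).map_smul
        (Real.sqrt (1 + ‖g0‖ ^ 2)) (nuVec n f y)
      calc fderiv ℝ (fun z : E n × ℝ => heatKernel n z τ) z (nuVec n f y) *
            Real.sqrt (1 + ‖g0‖ ^ 2)
          = Real.sqrt (1 + ‖g0‖ ^ 2) •
            fderiv ℝ (fun z : E n × ℝ => heatKernel n z τ) z (nuVec n f y) := by
            rw [smul_eq_mul, mul_comm]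
        _ = fderiv ℝ (fun z : E n × ℝ => heatKernel n z τ) z
              (Real.sqrt (1 + ‖g0‖ ^ 2) • nuVec n f y) := hmap.symm
        _ = fderiv ℝ (fun z : E n × ℝ => heatKernel n z τ) z ((-g0, (1:ℝ)) : E n × ℝ) := by
            rw [hν]
        _ = heatKernel n z τ *
              (-(2 * (inner ℝ z.1 (-g0) : ℝ) + 2 * z.2 * 1) / (4*τ)) :=
            my_hk_fderiv n hτ0 z ((-g0, (1:ℝ)))
    set Q : ℝ := ‖z.1‖^2 + z.2^2 with hQdef
    have hQ0 : 0 ≤ Q := by positivity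
    have h4πτ : (0:ℝ) < 4 * Real.pi * τ :=
      mul_pos (mul_pos four_pos Real.pi_pos) hτ0
    have hcpos : (0:ℝ) < (4 * Real.pi * τ) ^ (-(((n : ℝ) + 1) / 2)) :=
      Real.rpow_pos_of_pos h4πτ _
    have hkpos : 0 < heatKernel n z τ := by
      rw [heatKernel]
      exact mul_pos hcpos (Real.exp_pos _)
    -- abs bound on the linear factor
    have hgM : ‖g0‖ ≤ M := hM y
    have habs : |(-(2 * (inner ℝ z.1 (-g0) : ℝ) + 2 * z.2 * 1))|
        ≤ 2*(M+1)*(‖z.1‖+|z.2|) := by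
      have hi : |(inner ℝ z.1 (-g0) : ℝ)| ≤ ‖z.1‖ * M := by
        calc |(inner ℝ z.1 (-g0) : ℝ)| ≤ ‖z.1‖ * ‖-g0‖ := abs_real_inner_le_norm _ _
          _ = ‖z.1‖ * ‖g0‖ := by rw [norm_neg]
          _ ≤ ‖z.1‖ * M := by
              exact mul_le_mul_of_nonneg_left hgM (norm_nonneg _)
      exact my_habs_help hi (norm_nonneg _) hM0 (abs_nonneg _)
    -- distance bound
    have hdz : d ≤ max ‖z.1‖ |z.2| := by
      have hmem : ((y, f y) : E n × ℝ) ∈ {p : E n × ℝ | p.2 = f p.1} := rfl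
      have h1 : d ≤ dist xt ((y, f y) : E n × ℝ) :=
        Metric.infDist_le_dist_of_mem hmem
      rw [dist_eq_norm, ← norm_neg, neg_sub] at h1
      have h2 : ‖(y, f y) - xt‖ = max ‖z.1‖ |z.2| := by
        rw [← hzdef, Prod.norm_def, Real.norm_eq_abs]
      rw [h2] at h1
      exact h1
    have hd2Q : d^2 ≤ Q := by
      rw [hQdef]
      exact my_hd2Q_help hd0.le hdz (norm_nonneg _)
    -- exponential split
    have hsplit : Real.exp (-Q/(4*τ))
        = Real.exp (-Q/(16*τ)) * Real.exp (-Q/(16*τ)) * Real.exp (-Q/(8*τ)) := by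
      rw [← Real.exp_add, ← Real.exp_add]
      congr 1
      field_simp
      ring
    set w : ℝ := ‖z.1‖ + |z.2| with hwdef
    have hw0 : 0 ≤ w := by positivity
    have hQw : w^2 ≤ 2*Q := by
      rw [hwdef, hQdef]
      exact my_hQw_help _ _ (norm_nonneg _)
    -- F1 : w * exp(-Q/(16τ)) ≤ 8
    have F1 : w * Real.exp (-Q/(16*τ)) ≤ 8 := by
      have h1 : Real.exp (-Q/(16*τ)) ≤ Real.exp (-(w^2)/32) := by
        rw [Real.exp_le_exp]
        exact my_exp_mono1 hQ0 hQw hτ0 hτ1.le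
      calc w * Real.exp (-Q/(16*τ)) ≤ w * Real.exp (-(w^2)/32) :=
            mul_le_mul_of_nonneg_left h1 hw0
        _ ≤ 8 := my_wexp w hw0
    -- F2
    have F2 : Real.exp (-Q/(16*τ)) ≤ Real.exp (-d^2/(16*τ)) := by
      rw [Real.exp_le_exp]
      rw [div_le_div_iff_of_pos_right (by linarith : (0:ℝ) < 16*τ)]
      linarith
    -- F3
    have F3 : Real.exp (-Q/(8*τ)) ≤ Real.exp (-‖y - xt.1‖^2/8) := by
      rw [Real.exp_le_exp, ← hz1]
      rw [hQdef]
      exact my_exp_mono3 (by positivity) (by nlinarith [sq_nonneg z.2]) hτ0 hτ1.le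
    -- F4
    have F4 : (4 * Real.pi * τ) ^ (-(((n : ℝ) + 1) / 2)) ≤ (τ^(n+1))⁻¹ := by
      have h1 : (4 * Real.pi * τ) ^ (-(((n : ℝ) + 1) / 2))
          ≤ τ ^ (-(((n : ℝ) + 1) / 2)) := by
        apply Real.rpow_le_rpow_of_nonpos hτ0
        · nlinarith [Real.pi_gt_three]
        · have : (0:ℝ) ≤ (n:ℝ) + 1 := by positivity
          linarith
      have h2 : τ ^ (-(((n : ℝ) + 1) / 2)) ≤ τ ^ (-((n:ℝ)+1)) := by
        apply Real.rpow_le_rpow_of_exponent_ge hτ0 hτ1.le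
        have : (0:ℝ) ≤ (n:ℝ) + 1 := by positivity
        linarith
      have h3 : τ ^ (-((n:ℝ)+1)) = (τ^(n+1))⁻¹ := by
        rw [← Real.rpow_natCast τ (n+1), ← Real.rpow_neg hτ0.le]
        push_cast
        ring_nf
      linarith
    -- assemble
    rw [e1, abs_mul, abs_div, abs_of_pos hkpos,
      abs_of_pos (show (0:ℝ) < 4*τ by linarith), ← mul_div_assoc]
    have step1 : heatKernel n z τ * |(-(2 * (inner ℝ z.1 (-g0) : ℝ) + 2 * z.2 * 1))| / (4*τ)
        ≤ heatKernel n z τ * (2*(M+1)*w) / (4*τ) := by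
      rw [div_le_div_iff_of_pos_right (by linarith : (0:ℝ) < 4*τ)]
      exact mul_le_mul_of_nonneg_left habs hkpos.le
    refine step1.trans ?_
    have hhk : heatKernel n z τ
        = (4 * Real.pi * τ) ^ (-(((n : ℝ) + 1) / 2)) *
          (Real.exp (-Q/(16*τ)) * Real.exp (-Q/(16*τ)) * Real.exp (-Q/(8*τ))) := by
      rw [heatKernel, ← hsplit, hQdef]
    have lhs_eq : heatKernel n z τ * (2*(M+1)*w) / (4*τ)
        = ((M+1)/(2*τ)) * ((4 * Real.pi * τ) ^ (-(((n : ℝ) + 1) / 2)) *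
            ((w * Real.exp (-Q/(16*τ))) * (Real.exp (-Q/(16*τ)) * Real.exp (-Q/(8*τ))))) := by
      rw [hhk]; ring
    have rhs_eq : K * Real.exp (-‖y - xt.1‖^2/8)
        = ((M+1)/(2*τ)) * ((τ^(n+1))⁻¹ *
            (8 * (Real.exp (-d^2/(16*τ)) * Real.exp (-‖y - xt.1‖^2/8)))) := by
      rw [hKdef, pow_succ]
      field_simp
      ring
    rw [lhs_eq, rhs_eq]
    apply mul_le_mul_of_nonneg_left _
      (div_nonneg (by linarith : (0:ℝ) ≤ M+1) (by linarith : (0:ℝ) ≤ 2*τ))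
    apply mul_le_mul F4 _ _ (inv_nonneg.mpr (pow_pos hτ0 (n+1)).le)
    · apply mul_le_mul F1 (mul_le_mul F2 F3 (Real.exp_pos _).le (Real.exp_pos _).le)
        (mul_nonneg (Real.exp_pos _).le (Real.exp_pos _).le) (by norm_num)
    · exact mul_nonneg (mul_nonneg hw0 (Real.exp_pos _).le)
        (mul_nonneg (Real.exp_pos _).le (Real.exp_pos _).le)
  -- integrate the bound
  have hBint : Integrable (fun y : E n => K * Real.exp (-‖y - xt.1‖^2/8)) :=
    hI.const_mul K
  have main : |∫ y : E n, fderiv ℝ (fun z : E n × ℝ => heatKernel n z τ)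
        ((y, f y) - xt) (nuVec n f y) * Real.sqrt (1 + ‖gradient f y‖ ^ 2)|
      ≤ K * I := by
    calc |∫ y : E n, fderiv ℝ (fun z : E n × ℝ => heatKernel n z τ)
            ((y, f y) - xt) (nuVec n f y) * Real.sqrt (1 + ‖gradient f y‖ ^ 2)|
        ≤ ∫ y : E n, |fderiv ℝ (fun z : E n × ℝ => heatKernel n z τ)
            ((y, f y) - xt) (nuVec n f y) * Real.sqrt (1 + ‖gradient f y‖ ^ 2)| := by
          simpa only [Real.norm_eq_abs] using norm_integral_le_integral_norm
            (μ := volume) (fun y : E n => fderiv ℝ (fun z : E n × ℝ => heatKernel n z τ)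
              ((y, f y) - xt) (nuVec n f y) * Real.sqrt (1 + ‖gradient f y‖ ^ 2))
      _ ≤ ∫ y : E n, K * Real.exp (-‖y - xt.1‖^2/8) :=
          integral_mono_of_nonneg (Filter.Eventually.of_forall fun y => abs_nonneg _)
            hBint (Filter.Eventually.of_forall hbound)
      _ = K * I := by rw [hIdef, ← integral_const_mul]
  refine main.trans ?_
  -- final: K * I ≤ C * exp(-(d²/32)/τ)
  have key : (τ^(n+2))⁻¹ * Real.exp (-(d^2/32)/τ) ≤ P := by
    set v : ℝ := (d^2/32)/τ with hvdef
    have hd2pos : (0:ℝ) < d^2 := by nlinarith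
    have hv0 : 0 < v := div_pos (div_pos hd2pos (by norm_num)) hτ0
    have h1 : v^(n+2) / (Nat.factorial (n+2) : ℝ) ≤ Real.exp v :=
      Real.pow_div_factorial_le_exp v hv0.le (n+2)
    have hfact : (0:ℝ) < (Nat.factorial (n+2) : ℝ) := by
      exact_mod_cast Nat.factorial_pos _
    have h2 : v^(n+2) ≤ (Nat.factorial (n+2) : ℝ) * Real.exp v := by
      rw [div_le_iff₀ hfact] at h1
      linarith [h1]
    have hτv : τ * v = d^2/32 := by
      rw [hvdef]; field_simp
    have hA : τ^(n+2) * v^(n+2) = (d^2/32)^(n+2) := by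
      rw [← mul_pow, hτv]
    have hx : (32/d^2 : ℝ)^(n+2) = ((d^2/32 : ℝ)^(n+2))⁻¹ := by
      rw [← inv_pow, inv_div]
    rw [neg_div, ← hvdef, Real.exp_neg, hPdef, hx, ← hA, mul_inv]
    have h7 : (Real.exp v)⁻¹ ≤ (Nat.factorial (n+2) : ℝ) * (v^(n+2))⁻¹ := by
      rw [← div_eq_mul_inv, le_div_iff₀ (pow_pos hv0 (n+2)), inv_mul_eq_div,
        div_le_iff₀ (Real.exp_pos v)]
      linarith [h2]
    calc (τ^(n+2))⁻¹ * (Real.exp v)⁻¹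
        ≤ (τ^(n+2))⁻¹ * ((Nat.factorial (n+2) : ℝ) * (v^(n+2))⁻¹) :=
          mul_le_mul_of_nonneg_left h7 (inv_nonneg.mpr hτn2.le)
      _ = (Nat.factorial (n+2) : ℝ) * ((τ^(n+2))⁻¹ * (v^(n+2))⁻¹) := by ring
  have hsplit2 : Real.exp (-d^2/(16*τ))
      = Real.exp (-(d^2/32)/τ) * Real.exp (-(d^2/32)/τ) := by
    rw [← Real.exp_add]
    congr 1
    field_simp
    ring
  have hKI : K * I = 4*(M+1)*I * ((τ^(n+2))⁻¹ * Real.exp (-(d^2/32)/τ)) *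
      Real.exp (-(d^2/32)/τ) := by
    rw [hKdef, hsplit2]; ring
  rw [hKI]
  have h5 : 4*(M+1)*I * ((τ^(n+2))⁻¹ * Real.exp (-(d^2/32)/τ)) ≤ C := by
    have h6 : 4*(M+1)*I * ((τ^(n+2))⁻¹ * Real.exp (-(d^2/32)/τ)) ≤ 4*(M+1)*I * P := by
      apply mul_le_mul_of_nonneg_left key
      exact mul_nonneg (by linarith : (0:ℝ) ≤ 4*(M+1)) hInn
    have h7 : 4*(M+1)*I * P ≤ C := by
      rw [hCdef]
      nlinarith
    linarith
  calc 4*(M+1)*I * ((τ^(n+2))⁻¹ * Real.exp (-(d^2/32)/τ)) * Real.exp (-(d^2/32)/τ)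
      ≤ C * Real.exp (-(d^2/32)/τ) :=
        mul_le_mul_of_nonneg_right h5 (Real.exp_pos _).le
    _ = C * Real.exp (-(d^2/32)/τ) := rfl


/-- away from the boundary graph, the flux integral is
exponentially small: `|∫_{∂S_f} ⟨∇Γ(ỹ-x̃,τ), ν(ỹ)⟩ dσ(ỹ)| ≤ C e^{-α/τ}`. -/
theorem stmt_8 (n : ℕ) (hn : 1 ≤ n) (f : E n → ℝ)
    (hf : ContDiff ℝ 2 f) (hper : ZPeriodic n f) (xt : E n × ℝ)
    (hdist : 0 < Metric.infDist xt {p : E n × ℝ | p.2 = f p.1}) :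
    ∃ α > (0 : ℝ), ∃ C > (0 : ℝ), ∃ τ₀ > (0 : ℝ), ∀ τ : ℝ, 0 < τ → τ < τ₀ →
      |∫ y : E n, fderiv ℝ (fun z : E n × ℝ => heatKernel n z τ)
            ((y, f y) - xt) (nuVec n f y) *
          Real.sqrt (1 + ‖gradient f y‖ ^ 2)| ≤ C * Real.exp (-α / τ) := by
  exact stmt_8' n hn f hf hper xt hdist

end
end

section
/- Let n ≥ 1 and let B denote the set of bounded, continuous, ℤ^n-periodic functions ℝ^n → ℝ with the sup norm. Then the set D = { u ∈ B : there exist λ > 0 and f ∈ B such that u is a viscosity solution of u − λ Σ_{i,j=1}^n a_{ij}(∇u) ∂_i∂_j u = f } is dense in B: for every g ∈ B and ε > 0 there exists u ∈ D with sup_x |u(x) − g(x)| < ε. -/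
open MeasureTheory Real Filter

noncomputable section

open Topology Convolution

theorem fderiv_translate {F : Type*} [NormedAddCommGroup F] [NormedSpace ℝ F]
    {n : ℕ} (h : E n → F) (hd : Differentiable ℝ h) (v x : E n) (hper : ∀ y, h (y + v) = h y) :
    fderiv ℝ h (x + v) = fderiv ℝ h x := by
  have h1 : HasFDerivAt (fun y : E n => y + v) (ContinuousLinearMap.id ℝ (E n)) x :=
    (hasFDerivAt_id x).add_const v
  have h2 : HasFDerivAt (fun y => h (y + v)) ((fderiv ℝ h (x + v)).comp
      (ContinuousLinearMap.id ℝ (E n))) x := (hd (x + v)).hasFDerivAt.comp x h1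
  have h3 : HasFDerivAt h (fderiv ℝ h (x + v)) x := by
    simpa [funext hper] using h2
  rw [h3.fderiv]


def intVec (n : ℕ) (k : Fin n → ℤ) : E n :=
  (WithLp.equiv 2 (Fin n → ℝ)).symm (fun i => (k i : ℝ))

/-- every point can be shifted by an integer vector into the closed ball of radius √n. -/
theorem exists_shift (n : ℕ) (x : E n) : ∃ k : Fin n → ℤ,
    ‖x + intVec n k‖ ≤ Real.sqrt n ∧ ∀ i, x i + (k i : ℝ) = Int.fract (x i) := by
  refine ⟨fun i => -⌊x i⌋, ?_, ?_⟩
  · have hco : ∀ i : Fin n, (x + intVec n (fun i => -⌊x i⌋)) i = Int.fract (x i) := by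
      intro i
      show x i + ((-⌊x i⌋ : ℤ) : ℝ) = _
      simp [Int.fract, sub_eq_add_neg]
    rw [EuclideanSpace.norm_eq]
    have : ∑ i, ‖(x + intVec n (fun i => -⌊x i⌋)) i‖ ^ 2 ≤ (n : ℝ) := by
      calc ∑ i, ‖(x + intVec n (fun i => -⌊x i⌋)) i‖ ^ 2 ≤ ∑ _i : Fin n, (1:ℝ) := by
            refine Finset.sum_le_sum fun i _ => ?_
            rw [hco i]
            have h1 := Int.fract_nonneg (x i)
            have h2 := (Int.fract_lt_one (x i)).le
            rw [Real.norm_eq_abs, abs_of_nonneg h1]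
            nlinarith
        _ = n := by simp
    exact Real.sqrt_le_sqrt this
  · intro i
    show x i + ((-⌊x i⌋ : ℤ) : ℝ) = _
    push_cast
    simp [Int.fract, sub_eq_add_neg]

/-- continuous periodic is bounded -/
theorem bounded_of_periodic (n : ℕ) (h : E n → ℝ) (hc : Continuous h) (hp : ZPeriodic n h) :
    ∃ M : ℝ, ∀ x, |h x| ≤ M := by
  obtain ⟨M, hM⟩ := (isCompact_closedBall (0 : E n) (Real.sqrt n)).exists_bound_of_continuousOn
    hc.continuousOn
  have hp' : ∀ x k, h (x + intVec n k) = h x := hp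
  refine ⟨M, fun x => ?_⟩
  obtain ⟨k, hk, -⟩ := exists_shift n x
  have := hM (x + intVec n k) (by simpa [Metric.mem_closedBall, dist_eq_norm] using hk)
  rw [hp' x k] at this
  simpa using this

/-- continuous periodic is "uniformly continuous" in the needed quantitative form -/
theorem unif_cont (n : ℕ) (g : E n → ℝ) (hc : Continuous g) (hp : ZPeriodic n g)
    {ε : ℝ} (hε : 0 < ε) :
    ∃ δ > 0, ∀ x y : E n, dist x y < δ → |g x - g y| ≤ ε := by
  have hK : IsCompact (Metric.closedBall (0 : E n) (Real.sqrt n + 1)) := isCompact_closedBall _ _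
  have huc : UniformContinuousOn g (Metric.closedBall (0 : E n) (Real.sqrt n + 1)) :=
    hK.uniformContinuousOn_of_continuous hc.continuousOn
  rw [Metric.uniformContinuousOn_iff] at huc
  obtain ⟨δ, hδ, hδ'⟩ := huc ε hε
  have hp' : ∀ x k, g (x + intVec n k) = g x := hp
  refine ⟨min δ 1, by positivity, fun x y hxy => ?_⟩
  obtain ⟨k, hk, -⟩ := exists_shift n x
  have hx' : x + intVec n k ∈ Metric.closedBall (0 : E n) (Real.sqrt n + 1) := by
    simp only [Metric.mem_closedBall, dist_zero_right]
    have h1 : (0:ℝ) ≤ 1 := zero_le_one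
    linarith [hk]
  have hy' : y + intVec n k ∈ Metric.closedBall (0 : E n) (Real.sqrt n + 1) := by
    simp only [Metric.mem_closedBall, dist_zero_right]
    have : ‖y + intVec n k‖ ≤ ‖x + intVec n k‖ + ‖y - x‖ := by
      have : y + intVec n k = (x + intVec n k) + (y - x) := by abel
      rw [this]; exact norm_add_le _ _
    have h2 : ‖y - x‖ < 1 := by
      rw [← dist_eq_norm, dist_comm]
      exact lt_of_lt_of_le hxy (min_le_right _ _)
    linarith [hk]
  have hd : dist (x + intVec n k) (y + intVec n k) < δ := by
    rw [dist_add_right]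
    exact lt_of_lt_of_le hxy (min_le_left _ _)
  have := hδ' _ hx' _ hy' hd
  rw [hp' x k, hp' y k] at this
  rw [Real.dist_eq] at this
  exact this.le

theorem smooth_approx (n : ℕ) (g : E n → ℝ) (hb : ∃ M, ∀ x, |g x| ≤ M)
    (hc : Continuous g) (hp : ZPeriodic n g) {ε : ℝ} (hε : 0 < ε) :
    ∃ u : E n → ℝ, ContDiff ℝ ((⊤ : ℕ∞) : WithTop ℕ∞) u ∧ ZPeriodic n u ∧ ∀ x, |u x - g x| < ε := by
  obtain ⟨δ, hδ, hδ'⟩ := unif_cont n g hc hp (half_pos hε)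
  set φ : ContDiffBump (0 : E n) := ⟨δ/2, 3*δ/4, by positivity, by linarith⟩ with hφ
  set u : E n → ℝ := (φ.normed volume) ⋆[ContinuousLinearMap.lsmul ℝ ℝ, volume] g with hu
  have hgi : LocallyIntegrable g volume := hc.locallyIntegrable
  refine ⟨u, ?_, ?_, ?_⟩
  · exact HasCompactSupport.contDiff_convolution_left (μ := volume) (ContinuousLinearMap.lsmul ℝ ℝ) (φ.hasCompactSupport_normed (μ := volume)) (φ.contDiff_normed (μ := volume)) hgi
  · intro x k
    have hp' : ∀ x k, g (x + intVec n k) = g x := hp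
    show u (x + intVec n k) = u x
    rw [hu]
    simp only [convolution_def]
    congr 1
    funext t
    congr 1
    have : x + intVec n k - t = (x - t) + intVec n k := by abel
    rw [this, hp']
  · intro x
    have := φ.dist_normed_convolution_le (μ := volume) hc.aestronglyMeasurable
      (x₀ := x) (ε := ε/2) ?_
    · rw [Real.dist_eq] at this
      calc |u x - g x| ≤ ε/2 := this
        _ < ε := by linarith
    · intro y hy
      rw [Real.dist_eq]
      apply hδ'
      rw [Metric.mem_ball] at hy
      calc dist y x < 3*δ/4 := hy
        _ < δ := by linarith

notation "∞'" => ((⊤ : ℕ∞) : WithTop ℕ∞)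

theorem diff_fderiv {n : ℕ} {ψ : E n → ℝ} (hψ : ContDiff ℝ ∞' ψ) :
    Differentiable ℝ (fderiv ℝ ψ) :=
  (contDiff_infty_iff_fderiv.mp hψ).2.differentiable (by simp)

theorem fderiv_apply_const {n : ℕ} {ψ : E n → ℝ} (hψ : ContDiff ℝ ∞' ψ) (x w : E n) :
    fderiv ℝ (fun y => fderiv ℝ ψ y w) x = (fderiv ℝ (fderiv ℝ ψ) x).flip w := by
  have h := fderiv_clm_apply (c := fderiv ℝ ψ) (u := fun _ => w)
    ((diff_fderiv hψ) x) (differentiableAt_const w)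
  simpa using h

theorem secondD_eq {n : ℕ} {ψ : E n → ℝ} (hψ : ContDiff ℝ ∞' ψ) (x : E n) (i j : Fin n) :
    secondD n ψ x i j =
      (fderiv ℝ (fderiv ℝ ψ) x (EuclideanSpace.single i 1)) (EuclideanSpace.single j 1) := by
  rw [secondD, fderiv_apply_const hψ]
  rfl

theorem oneD_test (h : ℝ → ℝ) (hd : Differentiable ℝ h) (hcont : Continuous h) {c : ℝ}
    (hc : HasDerivAt (deriv h) c 0) (hmax : ∀ t, h t ≤ h 0) : c ≤ 0 := by
  by_contra hpos
  push_neg at hpos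
  have h0 : deriv h 0 = 0 :=
    (IsLocalMax.deriv_eq_zero (Eventually.of_forall hmax : IsLocalMax h 0))
  have hslope : Tendsto (slope (deriv h) 0) (𝓝[≠] 0) (𝓝 c) :=
    hasDerivAt_iff_tendsto_slope.mp hc
  have hev : ∀ᶠ t in 𝓝[≠] (0:ℝ), 0 < slope (deriv h) 0 t :=
    hslope.eventually (eventually_gt_nhds hpos)
  have hev' : ∀ᶠ t in 𝓝[>] (0:ℝ), 0 < slope (deriv h) 0 t :=
    hev.filter_mono (nhdsWithin_mono 0 fun t ht => ne_of_gt ht)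
  obtain ⟨u, hu, hsub⟩ := mem_nhdsGT_iff_exists_Ioo_subset.mp hev'
  have hu0 : (0:ℝ) < u := hu
  have hderivpos : ∀ t ∈ Set.Ioo (0:ℝ) u, 0 < deriv h t := by
    intro t ht
    have := hsub ht
    simp only [Set.mem_setOf_eq, slope_def_field, h0, sub_zero] at this
    have ht0 : 0 < t := ht.1
    calc (0:ℝ) = (deriv h t / t) * t - (deriv h t / t) * t := by ring
      _ < deriv h t := by
          nlinarith [mul_pos this ht0, div_mul_cancel₀ (deriv h t) (ne_of_gt ht0)]
  have hmono : StrictMonoOn h (Set.Icc 0 u) := by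
    apply strictMonoOn_of_deriv_pos (convex_Icc 0 u) hcont.continuousOn
    intro t ht
    rw [interior_Icc] at ht
    exact hderivpos t ht
  have : h 0 < h (u/2) := hmono (Set.mem_Icc.mpr ⟨le_refl 0, hu0.le⟩)
    (Set.mem_Icc.mpr ⟨by linarith, by linarith⟩) (by linarith)
  exact absurd (hmax (u/2)) (not_le.mpr this)

theorem quad_nonpos {n : ℕ} {ψ : E n → ℝ} (hψ : ContDiff ℝ ∞' ψ) {x : E n}
    (hmax : ∀ y, ψ y ≤ ψ x) (v : E n) :
    (fderiv ℝ (fderiv ℝ ψ) x v) v ≤ 0 := by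
  set L : ℝ → E n := fun t => x + t • v with hL
  have hLd : ∀ t : ℝ, HasDerivAt L v t := by
    intro t
    simpa [hL] using ((hasDerivAt_id t).smul_const v).const_add x
  have hψd : Differentiable ℝ ψ := hψ.differentiable (by simp)
  set h : ℝ → ℝ := fun t => ψ (L t) with hh
  have hhd : ∀ t : ℝ, HasDerivAt h (fderiv ℝ ψ (L t) v) t := fun t =>
    (hψd (L t)).hasFDerivAt.comp_hasDerivAt t (hLd t)
  have hder : deriv h = fun t => fderiv ℝ ψ (L t) v := funext fun t => (hhd t).deriv
  have hg1 : HasDerivAt (fun t => fderiv ℝ ψ (L t) v)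
      ((fderiv ℝ (fun y => fderiv ℝ ψ y v) (L 0)) v) 0 := by
    have hdiff : DifferentiableAt ℝ (fun y => fderiv ℝ ψ y v) (L 0) :=
      ((diff_fderiv hψ) (L 0)).clm_apply (differentiableAt_const v)
    exact hdiff.hasFDerivAt.comp_hasDerivAt 0 (hLd 0)
  have hL0 : L 0 = x := by simp [hL]
  have hc : HasDerivAt (deriv h) ((fderiv ℝ (fderiv ℝ ψ) x v) v) 0 := by
    rw [hder]
    have := hg1
    rw [hL0, fderiv_apply_const hψ] at this
    simpa using this
  have hmax' : ∀ t, h t ≤ h 0 := by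
    intro t
    simp only [hh, hL0]
    exact hmax _
  have hcont : Continuous h := (hψ.continuous).comp (by continuity)
  exact oneD_test h (fun t => (hhd t).differentiableAt) hcont hc
    (by simpa [hL0] using hmax')

theorem norm_sq_sum {n : ℕ} (p : E n) : ‖p‖ ^ 2 = ∑ i, p i ^ 2 := by
  rw [EuclideanSpace.norm_eq, Real.sq_sqrt (by positivity)]
  simp [sq_abs]

theorem p_decomp {n : ℕ} (p : E n) :
    p = ∑ i, p i • EuclideanSpace.single i (1:ℝ) := by
  have := (EuclideanSpace.basisFun (Fin n) ℝ).sum_repr p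
  simp only [EuclideanSpace.basisFun_repr, EuclideanSpace.basisFun_apply] at this
  exact this.symm

theorem alg_key {n : ℕ} (B : E n →L[ℝ] E n →L[ℝ] ℝ)
    (hQ : ∀ v : E n, B v v ≤ 0) (p : E n) :
    ∑ i, ∑ j, aMat n p i j * B (EuclideanSpace.single i 1) (EuclideanSpace.single j 1) ≤ 0 := by
  set e : Fin n → E n := fun i => EuclideanSpace.single i (1:ℝ) with he
  set H : Fin n → Fin n → ℝ := fun i j => B (e i) (e j) with hH
  set s : ℝ := ‖p‖ ^ 2 with hs
  have hs' : s = ∑ i, p i ^ 2 := norm_sq_sum p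
  have hspos : 0 < 1 + s := by positivity
  set T : ℝ := ∑ i, H i i with hT
  -- B p p = ∑ i ∑ j, p i * p j * H i j
  have hBpp : B p p = ∑ i, ∑ j, p i * p j * H i j := by
    have hp := p_decomp p
    calc B p p = B (∑ i, p i • e i) (∑ j, p j • e j) := by rw [← hp]
      _ = ∑ i, ∑ j, p i * p j * H i j := by
          have h1 : B (∑ i, p i • e i) = ∑ i, p i • B (e i) := by
            rw [map_sum]
            exact Finset.sum_congr rfl fun i _ => by rw [_root_.map_smul]
          rw [h1, ContinuousLinearMap.sum_apply]
          refine Finset.sum_congr rfl fun i _ => ?_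
          rw [ContinuousLinearMap.smul_apply, map_sum, Finset.smul_sum]
          refine Finset.sum_congr rfl fun j _ => ?_
          rw [_root_.map_smul]
          simp only [smul_eq_mul, hH]
          ring
  -- expansion of Q on the vectors w i j = p j • e i - p i • e j
  have hQexp : ∀ i j, B (p j • e i - p i • e j) (p j • e i - p i • e j) =
      p j ^ 2 * H i i - p i * p j * H i j - p i * p j * H j i + p i ^ 2 * H j j := by
    intro i j
    have expand : ∀ a b : ℝ, ∀ v w : E n,
        B (a • v - b • w) (a • v - b • w) =
          a * a * B v v - a * b * B v w - b * a * B w v + b * b * B w w := by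
      intro a b v w
      have e1 : B (a • v - b • w) = a • B v - b • B w := by
        rw [map_sub, _root_.map_smul, _root_.map_smul]
      rw [e1]
      simp only [ContinuousLinearMap.sub_apply, ContinuousLinearMap.smul_apply, map_sub,
        ContinuousLinearMap.map_smul, _root_.map_smul, smul_eq_mul]
      ring
    rw [expand]
    simp only [hH]
    ring
  -- sum identity
  have hsum : ∑ i, ∑ j, (p j ^ 2 * H i i - p i * p j * H i j - p i * p j * H j i
      + p i ^ 2 * H j j) = 2 * (s * T - ∑ i, ∑ j, p i * p j * H i j) := by
    have e1 : ∑ i, ∑ j, p j ^ 2 * H i i = s * T := by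
      calc ∑ i, ∑ j, p j ^ 2 * H i i = ∑ j, ∑ i, p j ^ 2 * H i i := Finset.sum_comm
        _ = s * T := by rw [hs', hT, Finset.sum_mul_sum]
    have e2 : ∑ i, ∑ j, p i ^ 2 * H j j = s * T := by
      rw [hs', hT, Finset.sum_mul_sum]
    have e3 : ∑ i, ∑ j, p i * p j * H j i = ∑ i, ∑ j, p i * p j * H i j := by
      rw [Finset.sum_comm]
      refine Finset.sum_congr rfl fun i _ => Finset.sum_congr rfl fun j _ => by ring
    simp only [Finset.sum_sub_distrib, Finset.sum_add_distrib]
    rw [e1, e2, e3]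
    ring
  have hQsum : ∑ i, ∑ j, B (p j • e i - p i • e j) (p j • e i - p i • e j) ≤ 0 := by
    refine Finset.sum_nonpos fun i _ => Finset.sum_nonpos fun j _ => hQ _
  have hTnonpos : T ≤ 0 := Finset.sum_nonpos fun i _ => hQ (e i)
  have hkey : s * T - ∑ i, ∑ j, p i * p j * H i j ≤ 0 := by
    have := hQsum
    simp only [hQexp] at this
    rw [hsum] at this
    linarith
  -- main computation
  have hmain : ∑ i, ∑ j, aMat n p i j * H i j = T - (∑ i, ∑ j, p i * p j * H i j) / (1 + s) := by
    simp only [aMat, sub_mul, Finset.sum_sub_distrib]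
    congr 1
    · rw [hT]
      refine Finset.sum_congr rfl fun i _ => ?_
      rw [Finset.sum_eq_single i]
      · simp
      · intro j _ hji
        simp [Ne.symm hji]
      · simp
    · rw [Finset.sum_div]
      refine Finset.sum_congr rfl fun i _ => ?_
      rw [Finset.sum_div]
      refine Finset.sum_congr rfl fun j _ => ?_
      rw [hs]
      ring
  rw [hmain, sub_nonpos, le_div_iff₀ hspos]
  nlinarith [hkey, hTnonpos, hs'.symm ▸ (by positivity : (0:ℝ) ≤ ∑ i, p i ^ 2)]

/-- the key comparison at a global max of `u - φ`. -/
theorem key_comparison {n : ℕ} {u φ : E n → ℝ} (hu : ContDiff ℝ ∞' u) (hφ : ContDiff ℝ ∞' φ)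
    {x : E n} (hmax : ∀ y, u y - φ y ≤ u x - φ x) :
    gradient φ x = gradient u x ∧
    ∑ i, ∑ j, aMat n (gradient u x) i j * secondD n u x i j ≤
      ∑ i, ∑ j, aMat n (gradient u x) i j * secondD n φ x i j := by
  set ψ : E n → ℝ := fun y => u y - φ y with hψdef
  have hψ : ContDiff ℝ ∞' ψ := hu.sub hφ
  have hud : Differentiable ℝ u := hu.differentiable (by simp)
  have hφd : Differentiable ℝ φ := hφ.differentiable (by simp)
  have hmax' : ∀ y, ψ y ≤ ψ x := hmax
  have hf0 : fderiv ℝ ψ x = 0 :=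
    IsLocalMax.fderiv_eq_zero (Eventually.of_forall hmax' : IsLocalMax ψ x)
  have hfsub : ∀ y, fderiv ℝ ψ y = fderiv ℝ u y - fderiv ℝ φ y := fun y =>
    fderiv_sub (hud y) (hφd y)
  have hgrad : fderiv ℝ u x = fderiv ℝ φ x := by
    have := hfsub x
    rw [hf0] at this
    have := this.symm
    rwa [sub_eq_zero] at this
  constructor
  · show (InnerProductSpace.toDual ℝ (E n)).symm (fderiv ℝ φ x)
      = (InnerProductSpace.toDual ℝ (E n)).symm (fderiv ℝ u x)
    rw [hgrad]
  · -- second derivatives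
    have hBsub : fderiv ℝ (fderiv ℝ ψ) x =
        fderiv ℝ (fderiv ℝ u) x - fderiv ℝ (fderiv ℝ φ) x := by
      have : fderiv ℝ ψ = fun y => fderiv ℝ u y - fderiv ℝ φ y := funext hfsub
      rw [this]
      exact fderiv_sub (diff_fderiv hu x) (diff_fderiv hφ x)
    have hsD : ∀ i j, secondD n u x i j - secondD n φ x i j =
        (fderiv ℝ (fderiv ℝ ψ) x (EuclideanSpace.single i 1)) (EuclideanSpace.single j 1) := by
      intro i j
      rw [secondD_eq hu, secondD_eq hφ, hBsub]
      simp
    have halg := alg_key (fderiv ℝ (fderiv ℝ ψ) x) (quad_nonpos hψ hmax') (gradient u x)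
    have : ∑ i, ∑ j, aMat n (gradient u x) i j * (secondD n u x i j - secondD n φ x i j) ≤ 0 := by
      calc ∑ i, ∑ j, aMat n (gradient u x) i j * (secondD n u x i j - secondD n φ x i j)
          = ∑ i, ∑ j, aMat n (gradient u x) i j *
            ((fderiv ℝ (fderiv ℝ ψ) x (EuclideanSpace.single i 1)) (EuclideanSpace.single j 1)) :=
            Finset.sum_congr rfl fun i _ => Finset.sum_congr rfl fun j _ => by rw [hsD]
        _ ≤ 0 := halg
    simp only [mul_sub, Finset.sum_sub_distrib] at this
    linarith

theorem smooth_is_viscosity {n : ℕ} (u : E n → ℝ) (hu : ContDiff ℝ ∞' u)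
    (lam : ℝ) (hlam : 0 < lam) :
    IsViscosityResolvent n lam
      (fun x => u x - lam * ∑ i, ∑ j, aMat n (gradient u x) i j * secondD n u x i j) u := by
  refine ⟨hu.continuous, ?_, ?_⟩
  · intro x φ hφ hmax
    have hφ' : ContDiff ℝ ∞' φ := hφ.of_le (by simp)
    obtain ⟨hg, hineq⟩ := key_comparison hu hφ' hmax
    rw [hg]
    have := mul_le_mul_of_nonneg_left hineq hlam.le
    dsimp only
    linarith
  · intro x φ hφ hmin
    have hφ' : ContDiff ℝ ∞' φ := hφ.of_le (by simp)
    -- apply key_comparison with roles swapped: φ - u has... use u' := φ? trick: max of φ - u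
    have hmax : ∀ y, φ y - u y ≤ φ x - u x := fun y => by linarith [hmin y]
    obtain ⟨hg, hineq⟩ := key_comparison hφ' hu hmax
    have := mul_le_mul_of_nonneg_left hineq hlam.le
    dsimp only
    rw [hg]
    linarith

section F
variable {n : ℕ} {u : E n → ℝ} (hu : ContDiff ℝ ∞' u) (hp : ∀ x (k : Fin n → ℤ), u (x + intVec n k) = u x)
include hu

theorem fderiv2_contDiff : ContDiff ℝ ∞' (fderiv ℝ (fderiv ℝ u)) := by
  have h1 : ContDiff ℝ ∞' (fderiv ℝ u) := (contDiff_infty_iff_fderiv.mp hu).2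
  exact (contDiff_infty_iff_fderiv.mp h1).2

theorem secondD_cont (i j : Fin n) : Continuous (fun x => secondD n u x i j) := by
  have : Continuous (fderiv ℝ (fderiv ℝ u)) := (fderiv2_contDiff hu).continuous
  have hc : Continuous (fun x => (fderiv ℝ (fderiv ℝ u) x (EuclideanSpace.single i 1))
      (EuclideanSpace.single j 1)) := by
    exact (ContinuousLinearMap.apply ℝ ℝ (EuclideanSpace.single j (1:ℝ))).continuous.comp
      ((ContinuousLinearMap.apply ℝ (E n →L[ℝ] ℝ) (EuclideanSpace.single i (1:ℝ))).continuous.comp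
        this)
  refine hc.congr fun x => ?_
  rw [secondD_eq hu]

theorem grad_cont : Continuous (fun x => gradient u x) := by
  have h1 : Continuous (fderiv ℝ u) := (contDiff_infty_iff_fderiv.mp hu).2.continuous
  exact (InnerProductSpace.toDual ℝ (E n)).symm.continuous.comp h1

theorem aMat_cont (i j : Fin n) : Continuous (fun p : E n => aMat n p i j) := by
  have hpi : ∀ m : Fin n, Continuous (fun p : E n => p m) := fun m =>
    (EuclideanSpace.proj m : E n →L[ℝ] ℝ).continuous
  have hden : Continuous (fun p : E n => 1 + ‖p‖ ^ 2) := by continuity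
  have hne : ∀ p : E n, (1 + ‖p‖ ^ 2) ≠ 0 := fun p => by positivity
  unfold aMat
  exact continuous_const.sub (((hpi i).mul (hpi j)).div hden hne)

theorem f_cont (lam : ℝ) : Continuous
    (fun x => u x - lam * ∑ i, ∑ j, aMat n (gradient u x) i j * secondD n u x i j) := by
  refine hu.continuous.sub (continuous_const.mul ?_)
  refine continuous_finset_sum _ fun i _ => continuous_finset_sum _ fun j _ => ?_
  exact ((aMat_cont hu i j).comp (grad_cont hu)).mul (secondD_cont hu i j)

include hp in
theorem grad_periodic (x : E n) (k : Fin n → ℤ) :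
    gradient u (x + intVec n k) = gradient u x := by
  unfold gradient
  rw [fderiv_translate u (hu.differentiable (by simp)) (intVec n k) x
    (fun y => hp y k)]

include hp in
theorem secondD_periodic (x : E n) (k : Fin n → ℤ) (i j : Fin n) :
    secondD n u (x + intVec n k) i j = secondD n u x i j := by
  rw [secondD_eq hu, secondD_eq hu]
  have h1 : ∀ y, fderiv ℝ u (y + intVec n k) = fderiv ℝ u y := fun y =>
    fderiv_translate u (hu.differentiable (by simp)) (intVec n k) y
      (fun z => hp z k)
  rw [fderiv_translate (fderiv ℝ u) (diff_fderiv hu) (intVec n k) x h1]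

include hp in
theorem f_periodic (lam : ℝ) : ZPeriodic n
    (fun x => u x - lam * ∑ i, ∑ j, aMat n (gradient u x) i j * secondD n u x i j) := by
  intro x k
  show u (x + intVec n k) - lam * ∑ i, ∑ j,
      aMat n (gradient u (x + intVec n k)) i j * secondD n u (x + intVec n k) i j = _
  rw [hp x k, grad_periodic hu hp x k]
  congr 2
  refine Finset.sum_congr rfl fun i _ => Finset.sum_congr rfl fun j _ => ?_
  rw [secondD_periodic hu hp x k]
end F


/-- the domain of the mean curvature operator is dense in `B`. -/
theorem stmt_16 (n : ℕ) (hn : 1 ≤ n) :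
    ∀ g : E n → ℝ, InB n g → ∀ ε > (0 : ℝ),
      ∃ u : E n → ℝ, InB n u ∧
        (∃ lam > (0 : ℝ), ∃ f : E n → ℝ, InB n f ∧ IsViscosityResolvent n lam f u) ∧
        ∀ x : E n, |u x - g x| < ε := by
  intro g hg ε hε
  obtain ⟨hb, hc, hp⟩ := hg
  obtain ⟨u, husm, hup, hucl⟩ := smooth_approx n g hb hc hp hε
  have hucont : Continuous u := husm.continuous
  have hup' : ∀ x (k : Fin n → ℤ), u (x + intVec n k) = u x := hup
  refine ⟨u, ⟨bounded_of_periodic n u hucont hup, hucont, hup⟩,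
    ⟨1, one_pos, fun x => u x - 1 * ∑ i, ∑ j, aMat n (gradient u x) i j * secondD n u x i j,
      ⟨bounded_of_periodic n _ (f_cont husm 1) (f_periodic husm hup' 1),
        f_cont husm 1, f_periodic husm hup' 1⟩,
      smooth_is_viscosity u husm 1 one_pos⟩, hucl⟩

end
end
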